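/- Let E_4 be the two-dimensional complex evolution algebra with structural matrix ((0,1),(0,0)) (i.e. e₁e₁ = e₂, e₂e₂ = 0). A linear map P : ℂ² → ℂ² is a Rota–Baxter operator of weight 0 on E_4 if and only if its matrix is of the form ((0, b),(0, d)) for some b, d ∈ ℂ, or of the form ((a, b),(0, a/2)) for some a, b ∈ ℂ. -/
import Mathlib


/-- The evolution-algebra product on `ℂ²` determined by a structural matrix `A`:
`e_i · e_i = a_{i1} e₁ + a_{i2} e₂` and `e₁ · e₂ = e₂ · e₁ = 0`. -/
noncomputable def evMulC (A : Matrix (Fin 2) (Fin 2) ℂ) (x y : Fin 2 → ℂ) : Fin 2 → ℂ :=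
  fun k => x 0 * y 0 * A 0 k + x 1 * y 1 * A 1 k

/-- `P` is a Rota–Baxter operator of weight `lam` on the evolution algebra with structural
matrix `A`: `P(x)·P(y) = P(x·P(y) + P(x)·y + lam x·y)` for all `x, y`. -/
def IsRotaBaxter (A : Matrix (Fin 2) (Fin 2) ℂ) (lam : ℂ)
    (P : (Fin 2 → ℂ) →ₗ[ℂ] (Fin 2 → ℂ)) : Prop :=
  ∀ x y : Fin 2 → ℂ,
    evMulC A (P x) (P y) = P (evMulC A x (P y) + evMulC A (P x) y + lam • evMulC A x y)

/-- Rota–Baxter operators of weight 0 on `E₄` (`e₁e₁ = e₂`) are exactly those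
with matrix `((0,b),(0,d))` or `((a,b),(0,a/2))`. -/
theorem rb_weight0_E4 (P : (Fin 2 → ℂ) →ₗ[ℂ] (Fin 2 → ℂ)) :
    IsRotaBaxter !![0, 1; 0, 0] 0 P ↔
      (∃ b d : ℂ, P ![1, 0] = ![0, b] ∧ P ![0, 1] = ![0, d]) ∨
      (∃ a b : ℂ, P ![1, 0] = ![a, b] ∧ P ![0, 1] = ![0, a / 2]) := by
  obtain ⟨v, hv⟩ : ∃ v, P ![1, 0] = v := ⟨_, rfl⟩
  obtain ⟨u, hu⟩ : ∃ u, P ![0, 1] = u := ⟨_, rfl⟩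
  have hP : ∀ x : Fin 2 → ℂ, P x = fun k => x 0 * v k + x 1 * u k := by
    intro x
    have hx : x = x 0 • ![1, 0] + x 1 • ![0, 1] := by
      funext i; fin_cases i <;> simp
    conv_lhs => rw [hx]
    simp only [map_add, map_smul, hv, hu]
    funext k
    simp [smul_eq_mul]
  rw [hv, hu]
  constructor
  · intro h
    have hc : u 0 = 0 := by
      have h1 := congrFun (h ![0, 1] ![0, 1]) 1
      simp [evMulC, hP] at h1
      exact h1
    have key : v 0 * v 0 = 2 * v 0 * u 1 := by
      have h1 := congrFun (h ![1, 0] ![1, 0]) 1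
      simp [evMulC, hP, hc] at h1
      linear_combination h1
    by_cases ha : v 0 = 0
    · left
      exact ⟨v 1, u 1, by funext i; fin_cases i <;> simp [ha, hc],
        by funext i; fin_cases i <;> simp [hc]⟩
    · right
      refine ⟨v 0, v 1, by funext i; fin_cases i <;> simp, ?_⟩
      have hd : u 1 = v 0 / 2 := by
        have h2 : v 0 * (v 0 - 2 * u 1) = 0 := by linear_combination key
        have h3 := (mul_eq_zero.mp h2).resolve_left ha
        field_simp
        linear_combination -h3
      funext i; fin_cases i <;> simp [hc, hd]
  · intro h x y
    have hc : u 0 = 0 := by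
      rcases h with ⟨b, d, h1, h2⟩ | ⟨a, b, h1, h2⟩ <;> rw [h2] <;> simp
    have key : v 0 * v 0 = 2 * v 0 * u 1 := by
      rcases h with ⟨b, d, h1, h2⟩ | ⟨a, b, h1, h2⟩
      · rw [h1]; simp
      · rw [h1, h2]; simp; ring
    funext k
    fin_cases k <;> simp [evMulC, hP, hc] <;> ring_nf <;>
      linear_combination x 0 * y 0 * key
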